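/- Assume the Algorithm (IFB) hypotheses, where A : H → Set H is maximal monotone and β-strongly monotone (β > 0), B : H → H is monotone and continuous, and u* ∈ Ω. Then for every k ≥ 1, ‖u_{k+1} − u*‖² ≤ ‖w_k − u*‖² − E·‖u_{k+1} − w_k‖² − 2Q·‖v_k − u*‖², where E = ((2 − γ)/γ)·((1 − σ)/(1 + σ))⁴ and Q = γλ_min β(1 − σ)²/(1 + σ)². -/

import Mathlib

open RealInnerProductSpace

set_option maxHeartbeats 1000000 in
/-- Under the Algorithm (IFB) hypotheses with `A` maximal and `β`-strongly
monotone and `B` monotone continuous, for every solution `u*` and every `k ≥ 1`: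
`‖u_{k+1} - u*‖² ≤ ‖w_k - u*‖² - E‖u_{k+1} - w_k‖² - 2Q‖v_k - u*‖²`,
with `E = ((2 - γ)/γ)((1 - σ)/(1 + σ))⁴` and `Q = γλ_min β(1 - σ)²/(1 + σ)²`. -/
theorem ifb_strongly_monotone_step_inequality
    {H : Type*} [NormedAddCommGroup H] [InnerProductSpace ℝ H] [CompleteSpace H]
    (A : H → Set H) (B : H → H) (β : ℝ) (hβ : 0 < β)
    (hAmono : ∀ u v : H, ∀ a ∈ A u, ∀ b ∈ A v, 0 ≤ ⟪a - b, u - v⟫)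
    (hAmax : ∀ u v : H, (∀ w : H, ∀ z ∈ A w, 0 ≤ ⟪u - w, v - z⟫) → v ∈ A u)
    (hAsmono : ∀ u v : H, ∀ a ∈ A u, ∀ b ∈ A v, β * ‖u - v‖ ^ 2 ≤ ⟪a - b, u - v⟫)
    (hBmono : ∀ u v : H, 0 ≤ ⟪B u - B v, u - v⟫)
    (hBcont : Continuous B)
    (ustar : H) (hstar : -B ustar ∈ A ustar)
    (σ γ s lamMin θbar : ℝ)
    (hσ : σ ∈ Set.Ioo (0 : ℝ) 1) (hγ : γ ∈ Set.Ioo (0 : ℝ) 2)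
    (hlamMin : 0 < lamMin) (hles : lamMin ≤ s)
    (u w v : ℕ → H) (lam θ : ℕ → ℝ) (φ : ℕ → H)
    (hlam : ∀ k : ℕ, lam k ∈ Set.Icc lamMin s)
    (hw : ∀ k : ℕ, 1 ≤ k → w k = u k + θ k • (u k - u (k - 1)))
    (hfb : ∀ k : ℕ, 1 ≤ k → ∃ a ∈ A (v k), w k - lam k • B (w k) = v k + lam k • a)
    (hls : ∀ k : ℕ, 1 ≤ k → lam k * ‖B (w k) - B (v k)‖ ≤ σ * ‖w k - v k‖)
    (hφdef : ∀ k : ℕ, φ k = (w k - v k) - lam k • (B (w k) - B (v k)))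
    (hφ : ∀ k : ℕ, 1 ≤ k → φ k ≠ 0)
    (hupd : ∀ k : ℕ, 1 ≤ k →
      u (k + 1) = w k - (γ * (⟪w k - v k, φ k⟫ / ‖φ k‖ ^ 2)) • φ k)
    (E Q : ℝ) (hE : E = ((2 - γ) / γ) * ((1 - σ) / (1 + σ)) ^ 4)
    (hQ : Q = γ * lamMin * β * (1 - σ) ^ 2 / (1 + σ) ^ 2)
    (hθ : ∀ k : ℕ, 0 ≤ θ k ∧ θ k ≤ θ (k + 1) ∧ θ (k + 1) ≤ θbar)
    (hθbar : θbar < E / (E + max 1 E)) :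
    ∀ k : ℕ, 1 ≤ k →
      ‖u (k + 1) - ustar‖ ^ 2 ≤
        ‖w k - ustar‖ ^ 2 - E * ‖u (k + 1) - w k‖ ^ 2 - 2 * Q * ‖v k - ustar‖ ^ 2 := by
  intro k hk
  obtain ⟨hσ0, hσ1⟩ := hσ
  obtain ⟨hγ0, hγ2⟩ := hγ
  obtain ⟨a, ha, heq⟩ := hfb k hk
  have hL0 : 0 < lam k := lt_of_lt_of_le hlamMin (hlam k).1
  have hwv : w k ≠ v k := by
    intro h
    apply hφ k hk
    rw [hφdef, h]
    simp
  have hnwv : 0 < ‖w k - v k‖ := norm_pos_iff.mpr (sub_ne_zero.mpr hwv)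
  have hN : 0 < ‖φ k‖ ^ 2 := pow_pos (norm_pos_iff.mpr (hφ k hk)) 2
  obtain ⟨d, hd⟩ : ∃ d : ℝ, d = ⟪w k - v k, φ k⟫ / ‖φ k‖ ^ 2 := ⟨_, rfl⟩
  have hu1 : u (k + 1) = w k - (γ * d) • φ k := by rw [hupd k hk, hd]
  -- inner product lower bound (step B)
  have hB1 : (1 - σ) * ‖w k - v k‖ ^ 2 ≤ ⟪w k - v k, φ k⟫ := by
    have hip : ⟪w k - v k, φ k⟫
        = ‖w k - v k‖ ^ 2 - lam k * ⟪w k - v k, B (w k) - B (v k)⟫ := by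
      rw [hφdef, inner_sub_right, real_inner_smul_right, real_inner_self_eq_norm_sq]
    have hcs : ⟪w k - v k, B (w k) - B (v k)⟫ ≤ ‖w k - v k‖ * ‖B (w k) - B (v k)‖ :=
      real_inner_le_norm _ _
    have hls' := hls k hk
    nlinarith [norm_nonneg (B (w k) - B (v k)), norm_nonneg (w k - v k)]
  -- norm upper bound (step C)
  have hC : ‖φ k‖ ≤ (1 + σ) * ‖w k - v k‖ := by
    have : ‖φ k‖ ≤ ‖w k - v k‖ + ‖lam k • (B (w k) - B (v k))‖ := by
      rw [hφdef]; exact norm_sub_le _ _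
    rw [norm_smul, Real.norm_eq_abs, abs_of_pos hL0] at this
    have hls' := hls k hk
    linarith
  have hC2 : ‖φ k‖ ^ 2 ≤ (1 + σ) ^ 2 * ‖w k - v k‖ ^ 2 := by
    nlinarith [norm_nonneg (φ k), norm_nonneg (w k - v k)]
  -- lower bound on d
  have hc0 : 0 < (1 - σ) / (1 + σ) ^ 2 := div_pos (by linarith) (by positivity)
  have hdlb : (1 - σ) / (1 + σ) ^ 2 ≤ d := by
    rw [hd, div_le_div_iff₀ (by positivity) hN]
    nlinarith [mul_le_mul_of_nonneg_left hC2 (le_of_lt (by linarith : (0:ℝ) < 1 - σ)),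
      mul_le_mul_of_nonneg_left hB1 (sq_nonneg (1 + σ))]
  have hd0 : 0 < d := lt_of_lt_of_le hc0 hdlb
  have hdN : d * ‖φ k‖ ^ 2 = ⟪w k - v k, φ k⟫ := by
    rw [hd]; exact div_mul_cancel₀ _ hN.ne'
  -- step A : ⟪φ, v - ustar⟫ ≥ λβ‖v - ustar‖²
  have hLa : lam k • a = w k - v k - lam k • B (w k) := by
    have h' : lam k • a = (w k - lam k • B (w k)) - v k := eq_sub_of_add_eq' heq.symm
    rw [h']; abel
  have hφeq : φ k = lam k • a + lam k • B (v k) := by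
    rw [hφdef, smul_sub, hLa]; abel
  have hA1 : lam k * β * ‖v k - ustar‖ ^ 2 ≤ ⟪φ k, v k - ustar⟫ := by
    have h1 := hAsmono (v k) ustar a ha (-B ustar) hstar
    have h2 := hBmono (v k) ustar
    have e1 : ⟪φ k, v k - ustar⟫
        = lam k * ⟪a - -B ustar, v k - ustar⟫
          + lam k * ⟪B (v k) - B ustar, v k - ustar⟫ := by
      rw [hφeq]
      simp only [inner_add_left, inner_sub_left, inner_neg_left, real_inner_smul_left]
      ring
    rw [e1]
    nlinarith [mul_le_mul_of_nonneg_left h1 hL0.le, mul_nonneg hL0.le h2]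
  -- expansion
  have hsub : u (k + 1) - ustar = (w k - ustar) - (γ * d) • φ k := by
    rw [hu1]; abel
  have hexp : ‖u (k + 1) - ustar‖ ^ 2
      = ‖w k - ustar‖ ^ 2 - 2 * (γ * d) * ⟪w k - ustar, φ k⟫
        + (γ * d) ^ 2 * ‖φ k‖ ^ 2 := by
    rw [hsub, norm_sub_sq_real, real_inner_smul_right, norm_smul, Real.norm_eq_abs, mul_pow, sq_abs]
    ring
  have hnw : ‖u (k + 1) - w k‖ ^ 2 = (γ * d) ^ 2 * ‖φ k‖ ^ 2 := by
    have h : u (k + 1) - w k = -((γ * d) • φ k) := by rw [hu1]; abel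
    rw [h, norm_neg, norm_smul, Real.norm_eq_abs, mul_pow, sq_abs]
  have hsplit : ⟪w k - ustar, φ k⟫ = ⟪w k - v k, φ k⟫ + ⟪v k - ustar, φ k⟫ := by
    simp only [inner_sub_left]; ring
  have hI : d * ‖φ k‖ ^ 2 + lam k * β * ‖v k - ustar‖ ^ 2 ≤ ⟪w k - ustar, φ k⟫ := by
    rw [hsplit, ← hdN]
    have := hA1
    rw [real_inner_comm] at this
    linarith
  -- scalar bounds
  have hE1 : E * γ ≤ 2 - γ := by
    have hr0 : (0:ℝ) ≤ (1 - σ) / (1 + σ) := div_nonneg (by linarith) (by linarith)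
    have hr1 : (1 - σ) / (1 + σ) ≤ 1 := by
      rw [div_le_one (by linarith)]; linarith
    have hr4 : ((1 - σ) / (1 + σ)) ^ 4 ≤ 1 := pow_le_one₀ hr0 hr1
    have : E * γ = (2 - γ) * ((1 - σ) / (1 + σ)) ^ 4 := by
      rw [hE]; field_simp
    rw [this]
    nlinarith
  have hQ1 : Q ≤ γ * lam k * β * d := by
    have h1 : Q ≤ γ * lamMin * β * ((1 - σ) / (1 + σ) ^ 2) := by
      rw [hQ, show γ * lamMin * β * ((1 - σ) / (1 + σ) ^ 2)
          = γ * lamMin * β * (1 - σ) / (1 + σ) ^ 2 by ring]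
      gcongr
      nlinarith
    have h2 : γ * lamMin * β * ((1 - σ) / (1 + σ) ^ 2) ≤ γ * lam k * β * d := by
      gcongr
      exact (hlam k).1
    linarith
  -- final combination
  rw [hexp, hnw]
  have h1 : 2 * (γ * d) * (d * ‖φ k‖ ^ 2 + lam k * β * ‖v k - ustar‖ ^ 2)
      ≤ 2 * (γ * d) * ⟪w k - ustar, φ k⟫ :=
    mul_le_mul_of_nonneg_left hI (by positivity)
  have h2 : (E * γ - (2 - γ)) * (γ * (d ^ 2 * ‖φ k‖ ^ 2)) ≤ 0 :=
    mul_nonpos_of_nonpos_of_nonneg (by linarith) (by positivity)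
  have h3 : Q * ‖v k - ustar‖ ^ 2 ≤ (γ * lam k * β * d) * ‖v k - ustar‖ ^ 2 :=
    mul_le_mul_of_nonneg_right hQ1 (by positivity)
  nlinarith [h1, h2, h3]
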